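/- Let X_1,…,X_m (m ≥ 2) be isentropic random variables. For a partition P of M = {1,…,m} with |P| ≥ 2 cells, define δ(P) = (1/(|P|−1)) ∑_{A ∈ P} H(X_{M\A} | X_A). Then for every nonempty B ⊆ M with |B| ≤ m−2, δ(P_B) ≤ δ(S), where P_B is the partition whose cells are the complement B^c together with the singletons of elements of B, and S is the partition of M into singletons. -/

import Mathlib

open Finset

/-- The probability that the random variable `X` takes the value `a`. -/
noncomputable def prb {Ω α : Type*} [Fintype Ω] [DecidableEq α]
    (p : Ω → ℝ) (X : Ω → α) (a : α) : ℝ :=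
  ∑ ω ∈ Finset.univ.filter (fun ω => X ω = a), p ω

/-- Shannon entropy of a random variable `X` on a finite probability space. -/
noncomputable def ent {Ω α : Type*} [Fintype Ω] [Fintype α] [DecidableEq α]
    (p : Ω → ℝ) (X : Ω → α) : ℝ :=
  ∑ a : α, Real.negMulLog (prb p X a)

/-- Joint Shannon entropy `H(X_A)` of the collection `(X_i : i ∈ A)`. -/
noncomputable def entS {Ω ι α : Type*} [Fintype Ω] [DecidableEq ι]
    [Fintype α] [DecidableEq α] (p : Ω → ℝ) (X : ι → Ω → α) (A : Finset ι) : ℝ :=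
  ent p (fun ω => fun i : A => X i.1 ω)

section Aux

variable {Ω α β γ : Type*} [Fintype Ω]

lemma prb_nonneg [DecidableEq α] (p : Ω → ℝ) (hp0 : ∀ ω, 0 ≤ p ω) (X : Ω → α) (a : α) :
    0 ≤ prb p X a :=
  Finset.sum_nonneg fun ω _ => hp0 ω

lemma prb_comp_inj [DecidableEq α] [DecidableEq β] (p : Ω → ℝ) (X : Ω → α)
    {e : α → β} (he : Function.Injective e) (a : α) :
    prb p (fun ω => e (X ω)) (e a) = prb p X a := by
  unfold prb
  congr 1
  ext ω
  simp [he.eq_iff]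

lemma ent_comp_inj [Fintype α] [DecidableEq α] [Fintype β] [DecidableEq β]
    (p : Ω → ℝ) (X : Ω → α) {e : α → β} (he : Function.Injective e) :
    ent p (fun ω => e (X ω)) = ent p X := by
  unfold ent
  have h0 : ∀ b ∈ (Finset.univ : Finset β), b ∉ Finset.univ.image e →
      Real.negMulLog (prb p (fun ω => e (X ω)) b) = 0 := by
    intro b _ hb
    have : prb p (fun ω => e (X ω)) b = 0 := by
      unfold prb
      rw [Finset.filter_false_of_mem, Finset.sum_empty]
      intro ω _ h
      exact hb (Finset.mem_image.mpr ⟨X ω, Finset.mem_univ _, h⟩)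
    rw [this, Real.negMulLog_zero]
  rw [← Finset.sum_subset (Finset.subset_univ (Finset.univ.image e)) h0,
    Finset.sum_image (fun a _ b _ h => he h)]
  exact Finset.sum_congr rfl fun a _ => by rw [prb_comp_inj p X he a]

lemma prb_fst [Fintype β] [DecidableEq α] [DecidableEq β]
    (p : Ω → ℝ) (X : Ω → α) (Y : Ω → β) (a : α) :
    prb p X a = ∑ b : β, prb p (fun ω => (X ω, Y ω)) (a, b) := by
  unfold prb
  rw [← Finset.sum_fiberwise_of_maps_to (g := Y) (fun ω _ => Finset.mem_univ (Y ω)) p]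
  refine Finset.sum_congr rfl fun b _ => ?_
  congr 1
  ext ω
  simp only [Finset.mem_filter, Finset.mem_univ, true_and, Finset.filter_filter, Prod.mk.injEq]

lemma ent_submodular [Fintype α] [DecidableEq α] [Fintype β] [DecidableEq β]
    [Fintype γ] [DecidableEq γ]
    (p : Ω → ℝ) (hp0 : ∀ ω, 0 ≤ p ω)
    (U : Ω → α) (V : Ω → β) (W : Ω → γ) :
    ent p (fun ω => (U ω, V ω, W ω)) + ent p U
      ≤ ent p (fun ω => (U ω, V ω)) + ent p (fun ω => (U ω, W ω)) := by
  set a : α × β × γ → ℝ := prb p (fun ω => (U ω, V ω, W ω)) with ha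
  have ha0 : ∀ x, 0 ≤ a x := fun x => prb_nonneg p hp0 _ x
  set pU : α → ℝ := fun u => ∑ y : β × γ, a (u, y) with hpU
  set pUV : α → β → ℝ := fun u v => ∑ w : γ, a (u, v, w) with hpUV
  set pUW : α → γ → ℝ := fun u w => ∑ v : β, a (u, v, w) with hpUW
  have hpU0 : ∀ u, 0 ≤ pU u := fun u => Finset.sum_nonneg fun y _ => ha0 _
  have hpUV0 : ∀ u v, 0 ≤ pUV u v := fun u v => Finset.sum_nonneg fun w _ => ha0 _
  have hpUW0 : ∀ u w, 0 ≤ pUW u w := fun u w => Finset.sum_nonneg fun v _ => ha0 _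
  -- marginal identities
  have hprbU : ∀ u, prb p U u = pU u := fun u =>
    prb_fst p U (fun ω => (V ω, W ω)) u
  have hprbUV : ∀ u v, prb p (fun ω => (U ω, V ω)) (u, v) = pUV u v := by
    intro u v
    rw [prb_fst p (fun ω => (U ω, V ω)) W (u, v)]
    refine Finset.sum_congr rfl fun w _ => ?_
    have he : Function.Injective (fun x : α × β × γ => ((x.1, x.2.1), x.2.2)) := by
      intro x y h
      simp only [Prod.mk.injEq] at h
      exact Prod.ext h.1.1 (Prod.ext h.1.2 h.2)
    exact prb_comp_inj p (fun ω => (U ω, V ω, W ω)) he (u, v, w)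
  have hprbUW : ∀ u w, prb p (fun ω => (U ω, W ω)) (u, w) = pUW u w := by
    intro u w
    rw [prb_fst p (fun ω => (U ω, W ω)) V (u, w)]
    refine Finset.sum_congr rfl fun v _ => ?_
    have he : Function.Injective (fun x : α × β × γ => ((x.1, x.2.2), x.2.1)) := by
      intro x y h
      simp only [Prod.mk.injEq] at h
      exact Prod.ext h.1.1 (Prod.ext h.2 h.1.2)
    exact prb_comp_inj p (fun ω => (U ω, V ω, W ω)) he (u, v, w)
  -- the four entropies as sums over triples
  have E1 : ent p (fun ω => (U ω, V ω, W ω)) = ∑ x : α × β × γ, -(a x * Real.log (a x)) :=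
    Finset.sum_congr rfl fun x _ => by rw [Real.negMulLog, neg_mul]
  have E2 : ent p U = ∑ x : α × β × γ, -(a x * Real.log (pU x.1)) := by
    unfold ent
    rw [Fintype.sum_prod_type (f := fun x : α × β × γ => -(a x * Real.log (pU x.1)))]
    refine Finset.sum_congr rfl fun u _ => ?_
    dsimp only
    rw [hprbU, Real.negMulLog, neg_mul, Finset.sum_neg_distrib, ← Finset.sum_mul]
  have E3 : ent p (fun ω => (U ω, V ω)) = ∑ x : α × β × γ, -(a x * Real.log (pUV x.1 x.2.1)) := by
    unfold ent
    rw [Fintype.sum_prod_type (f := fun x : α × β × γ => -(a x * Real.log (pUV x.1 x.2.1))),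
      Fintype.sum_prod_type (f := fun y : α × β => Real.negMulLog (prb p (fun ω => (U ω, V ω)) y))]
    refine Finset.sum_congr rfl fun u _ => ?_
    rw [Fintype.sum_prod_type (f := fun y : β × γ => -(a (u, y) * Real.log (pUV u y.1)))]
    refine Finset.sum_congr rfl fun v _ => ?_
    dsimp only
    rw [hprbUV, Real.negMulLog, neg_mul, Finset.sum_neg_distrib, ← Finset.sum_mul]
  have E4 : ent p (fun ω => (U ω, W ω)) = ∑ x : α × β × γ, -(a x * Real.log (pUW x.1 x.2.2)) := by
    unfold ent
    rw [Fintype.sum_prod_type (f := fun x : α × β × γ => -(a x * Real.log (pUW x.1 x.2.2))),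
      Fintype.sum_prod_type (f := fun y : α × γ => Real.negMulLog (prb p (fun ω => (U ω, W ω)) y))]
    refine Finset.sum_congr rfl fun u _ => ?_
    rw [Fintype.sum_prod_type (f := fun y : β × γ => -(a (u, y) * Real.log (pUW u y.2)))]
    rw [Finset.sum_comm]
    refine Finset.sum_congr rfl fun w _ => ?_
    dsimp only
    rw [hprbUW, Real.negMulLog, neg_mul, Finset.sum_neg_distrib, ← Finset.sum_mul]
  -- the auxiliary distribution b
  set b : α × β × γ → ℝ :=
    fun x => if pU x.1 = 0 then 0 else pUV x.1 x.2.1 * pUW x.1 x.2.2 / pU x.1 with hb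
  have hb0 : ∀ x, 0 ≤ b x := by
    intro x
    rw [hb]
    dsimp only
    split
    · exact le_refl 0
    · exact div_nonneg (mul_nonneg (hpUV0 _ _) (hpUW0 _ _)) (hpU0 _)
  -- ∑ b = ∑ a
  have hsumVW : ∀ u, ∑ v : β, pUV u v = pU u := by
    intro u
    rw [hpU]
    dsimp only
    rw [Fintype.sum_prod_type]
  have hsumWV : ∀ u, ∑ w : γ, pUW u w = pU u := by
    intro u
    rw [hpU]
    dsimp only
    rw [Fintype.sum_prod_type]
    exact Finset.sum_comm
  have hba : ∑ x : α × β × γ, b x = ∑ x : α × β × γ, a x := by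
    rw [Fintype.sum_prod_type (f := b), Fintype.sum_prod_type (f := a)]
    refine Finset.sum_congr rfl fun u _ => ?_
    by_cases h : pU u = 0
    · have : ∀ y : β × γ, a (u, y) = 0 := by
        intro y
        have h1 : a (u, y) ≤ pU u :=
          Finset.single_le_sum (f := fun y : β × γ => a (u, y)) (fun i _ => ha0 _)
            (Finset.mem_univ y)
        have h2 := ha0 (u, y)
        rw [h] at h1
        linarith
      simp [hb, h, this]
    · have : ∀ y : β × γ, b (u, y) = pUV u y.1 * pUW u y.2 / pU u := by
        intro y
        rw [hb]
        simp [h]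
      calc ∑ y : β × γ, b (u, y) = ∑ y : β × γ, pUV u y.1 * pUW u y.2 / pU u :=
            Finset.sum_congr rfl fun y _ => this y
        _ = (∑ y : β × γ, pUV u y.1 * pUW u y.2) / pU u := by rw [Finset.sum_div]
        _ = ((∑ v : β, pUV u v) * (∑ w : γ, pUW u w)) / pU u := by
            rw [Finset.sum_mul_sum, Fintype.sum_prod_type]
        _ = (pU u * pU u) / pU u := by rw [hsumVW, hsumWV]
        _ = pU u := by field_simp
        _ = ∑ y : β × γ, a (u, y) := rfl
  -- pointwise inequality
  have hterm : ∀ x : α × β × γ,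
      a x * Real.log (pUV x.1 x.2.1) + a x * Real.log (pUW x.1 x.2.2)
        - a x * Real.log (pU x.1) - a x * Real.log (a x) ≤ b x - a x := by
    intro x
    rcases eq_or_lt_of_le (ha0 x) with h | h
    · rw [← h]
      simp only [zero_mul]
      have := hb0 x
      linarith
    · have hxU : a x ≤ pU x.1 := by
        have : a (x.1, x.2) ≤ pU x.1 :=
          Finset.single_le_sum (f := fun y : β × γ => a (x.1, y)) (fun i _ => ha0 _)
            (Finset.mem_univ x.2)
        simpa using this
      have hxUV : a x ≤ pUV x.1 x.2.1 := by
        have : a (x.1, x.2.1, x.2.2) ≤ pUV x.1 x.2.1 :=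
          Finset.single_le_sum (f := fun w : γ => a (x.1, x.2.1, w)) (fun i _ => ha0 _)
            (Finset.mem_univ x.2.2)
        simpa using this
      have hxUW : a x ≤ pUW x.1 x.2.2 := by
        have : a (x.1, x.2.1, x.2.2) ≤ pUW x.1 x.2.2 :=
          Finset.single_le_sum (f := fun v : β => a (x.1, v, x.2.2)) (fun i _ => ha0 _)
            (Finset.mem_univ x.2.1)
        simpa using this
      have hU : 0 < pU x.1 := lt_of_lt_of_le h hxU
      have hUV : 0 < pUV x.1 x.2.1 := lt_of_lt_of_le h hxUV
      have hUW : 0 < pUW x.1 x.2.2 := lt_of_lt_of_le h hxUW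
      have hbx : b x = pUV x.1 x.2.1 * pUW x.1 x.2.2 / pU x.1 := by
        rw [hb]
        simp [ne_of_gt hU]
      have hbpos : 0 < b x := by
        rw [hbx]
        positivity
      have hlogb : Real.log (b x / a x)
          = Real.log (pUV x.1 x.2.1) + Real.log (pUW x.1 x.2.2)
            - Real.log (pU x.1) - Real.log (a x) := by
        rw [Real.log_div (ne_of_gt hbpos) (ne_of_gt h), hbx,
          Real.log_div (by positivity) (ne_of_gt hU),
          Real.log_mul (ne_of_gt hUV) (ne_of_gt hUW)]
      have hlog := Real.log_le_sub_one_of_pos (div_pos hbpos h)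
      have h1 : a x * Real.log (b x / a x) ≤ a x * (b x / a x - 1) :=
        mul_le_mul_of_nonneg_left hlog (le_of_lt h)
      have h2 : a x * (b x / a x - 1) = b x - a x := by
        field_simp
      calc a x * Real.log (pUV x.1 x.2.1) + a x * Real.log (pUW x.1 x.2.2)
            - a x * Real.log (pU x.1) - a x * Real.log (a x)
          = a x * Real.log (b x / a x) := by rw [hlogb]; ring
        _ ≤ a x * (b x / a x - 1) := h1
        _ = b x - a x := h2
  -- conclusion
  have hF : ∑ x : α × β × γ,
      (a x * Real.log (pUV x.1 x.2.1) + a x * Real.log (pUW x.1 x.2.2)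
        - a x * Real.log (pU x.1) - a x * Real.log (a x)) ≤ 0 := by
    calc ∑ x : α × β × γ,
        (a x * Real.log (pUV x.1 x.2.1) + a x * Real.log (pUW x.1 x.2.2)
          - a x * Real.log (pU x.1) - a x * Real.log (a x))
        ≤ ∑ x : α × β × γ, (b x - a x) := Finset.sum_le_sum fun x _ => hterm x
      _ = ∑ x : α × β × γ, b x - ∑ x : α × β × γ, a x := Finset.sum_sub_distrib _ _
      _ = 0 := by rw [hba, sub_self]
  rw [E1, E2, E3, E4, ← Finset.sum_add_distrib, ← Finset.sum_add_distrib]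
  have hsplit : ∀ x : α × β × γ,
      (-(a x * Real.log (a x)) + -(a x * Real.log (pU x.1)))
        = (-(a x * Real.log (pUV x.1 x.2.1)) + -(a x * Real.log (pUW x.1 x.2.2)))
          + (a x * Real.log (pUV x.1 x.2.1) + a x * Real.log (pUW x.1 x.2.2)
              - a x * Real.log (pU x.1) - a x * Real.log (a x)) := by
    intro x
    ring
  calc ∑ x : α × β × γ, (-(a x * Real.log (a x)) + -(a x * Real.log (pU x.1)))
      = ∑ x : α × β × γ,
          ((-(a x * Real.log (pUV x.1 x.2.1)) + -(a x * Real.log (pUW x.1 x.2.2)))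
            + (a x * Real.log (pUV x.1 x.2.1) + a x * Real.log (pUW x.1 x.2.2)
                - a x * Real.log (pU x.1) - a x * Real.log (a x))) :=
        Finset.sum_congr rfl fun x _ => hsplit x
    _ = ∑ x : α × β × γ, (-(a x * Real.log (pUV x.1 x.2.1)) + -(a x * Real.log (pUW x.1 x.2.2)))
          + ∑ x : α × β × γ,
            (a x * Real.log (pUV x.1 x.2.1) + a x * Real.log (pUW x.1 x.2.2)
              - a x * Real.log (pU x.1) - a x * Real.log (a x)) := Finset.sum_add_distrib
    _ ≤ ∑ x : α × β × γ, (-(a x * Real.log (pUV x.1 x.2.1)) + -(a x * Real.log (pUW x.1 x.2.2)))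
          + 0 := by linarith
    _ = ∑ x : α × β × γ, (-(a x * Real.log (pUV x.1 x.2.1)) + -(a x * Real.log (pUW x.1 x.2.2))) :=
        add_zero _

variable {ι : Type*} [DecidableEq ι]

/-- Splitting a function on `A ∪ D` into its restrictions to `A` and `D`. -/
def splitFun (A D : Finset ι) (f : ((A ∪ D : Finset ι) : Type _) → α) :
    (A → α) × (D → α) :=
  (fun i => f ⟨i.1, Finset.mem_union_left _ i.2⟩,
   fun i => f ⟨i.1, Finset.mem_union_right _ i.2⟩)

lemma splitFun_inj (A D : Finset ι) : Function.Injective (splitFun (α := α) A D) := by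
  intro f g h
  funext x
  obtain ⟨i, hi⟩ := x
  rcases Finset.mem_union.mp hi with h' | h'
  · exact congrFun (congrArg Prod.fst h) ⟨i, h'⟩
  · exact congrFun (congrArg Prod.snd h) ⟨i, h'⟩

lemma entS_union [Fintype α] [DecidableEq α] (p : Ω → ℝ) (X : ι → Ω → α) (A D : Finset ι) :
    entS p X (A ∪ D)
      = ent p (fun ω => ((fun i : A => X i.1 ω), (fun i : D => X i.1 ω))) := by
  have h := ent_comp_inj p (fun ω => fun i : (A ∪ D : Finset ι) => X i.1 ω)
    (splitFun_inj (α := α) A D)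
  rw [entS, ← h]
  rfl

lemma entS_submodular [Fintype α] [DecidableEq α] (p : Ω → ℝ) (hp0 : ∀ ω, 0 ≤ p ω)
    (X : ι → Ω → α) {A C : Finset ι} {j : ι} (hAC : A ⊆ C) (hj : j ∉ C) :
    entS p X (insert j C) + entS p X A ≤ entS p X C + entS p X (insert j A) := by
  set U : Ω → (A → α) := fun ω => fun i : A => X i.1 ω with hU
  set V : Ω → ((C \ A : Finset ι) → α) := fun ω => fun i : (C \ A : Finset ι) => X i.1 ω with hV
  set W : Ω → (({j} : Finset ι) → α) := fun ω => fun i : ({j} : Finset ι) => X i.1 ω with hW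
  have hC : entS p X C = ent p (fun ω => (U ω, V ω)) := by
    have h := entS_union p X A (C \ A)
    rwa [Finset.union_sdiff_of_subset hAC] at h
  have hjA : entS p X (insert j A) = ent p (fun ω => (U ω, W ω)) := by
    rw [show insert j A = A ∪ {j} by rw [Finset.insert_eq, Finset.union_comm], entS_union]
  have hA : entS p X A = ent p U := rfl
  have hjC : entS p X (insert j C) = ent p (fun ω => (U ω, V ω, W ω)) := by
    have h1 : insert j C = A ∪ ((C \ A) ∪ {j}) := by
      ext i
      simp only [Finset.mem_insert, Finset.mem_union, Finset.mem_sdiff, Finset.mem_singleton]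
      have hAi : i ∈ A → i ∈ C := fun h => hAC h
      tauto
    rw [h1, entS_union]
    have h2 := ent_comp_inj p
      (fun ω => ((fun i : A => X i.1 ω),
        (fun i : ((C \ A) ∪ {j} : Finset ι) => X i.1 ω)))
      (he := Function.Injective.prodMap (fun x y h => h) (splitFun_inj (α := α) (C \ A) {j}))
    rw [← h2]
    rfl
  rw [hC, hjA, hA, hjC]
  exact ent_submodular p hp0 U V W

end Aux

/-- For isentropic `X_1,…,X_m` (`m ≥ 2`) and nonempty `B ⊆ M` with `|B| ≤ m−2`,
`δ(P_B) ≤ δ(S)`, where `δ(P) = (1/(|P|−1)) ∑_{A ∈ P} H(X_{M∖A} | X_A)`, `P_B` is the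
partition `{Bᶜ} ∪ {{b} : b ∈ B}` and `S` is the singleton partition.  Here
`H(X_{M∖A}|X_A) = H(X_M) − H(X_A)`. -/
theorem isentropic_deltaPB_le_deltaS {Ω α : Type*} [Fintype Ω] [Fintype α] [DecidableEq α]
    {m : ℕ} (hm : 2 ≤ m) (p : Ω → ℝ) (hp0 : ∀ ω, 0 ≤ p ω) (hp1 : ∑ ω : Ω, p ω = 1)
    (X : Fin m → Ω → α)
    (hiso : ∀ A B : Finset (Fin m), A.Nonempty → B.Nonempty → A.card = B.card →
      entS p X A = entS p X B)
    (B : Finset (Fin m)) (hB : B.Nonempty) (hBcard : B.card ≤ m - 2) :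
    (1 / (B.card : ℝ)) *
        ((entS p X Finset.univ - entS p X Bᶜ)
          + ∑ b ∈ B, (entS p X Finset.univ - entS p X {b}))
      ≤ (1 / ((m : ℝ) - 1)) *
        ∑ i : Fin m, (entS p X Finset.univ - entS p X {i}) := by
  classical
  -- canonical sets of each cardinality
  set Ck : ℕ → Finset (Fin m) := fun k => Finset.univ.filter (fun i : Fin m => i.1 < k) with hCk
  have hCkcard : ∀ k, k ≤ m → (Ck k).card = k := by
    intro k hk
    have he : Ck k = Finset.attachFin (Finset.range k)
        (fun a ha => lt_of_lt_of_le (Finset.mem_range.mp ha) hk) := by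
      ext i
      simp [hCk, Finset.mem_attachFin]
    rw [he, Finset.card_attachFin, Finset.card_range]
  have hCkne : ∀ k, 1 ≤ k → (Ck k).Nonempty := by
    intro k hk
    refine ⟨⟨0, by omega⟩, ?_⟩
    simp only [hCk, Finset.mem_filter, Finset.mem_univ, true_and]
    omega
  set h : ℕ → ℝ := fun k => entS p X (Ck k) with hh
  have hSet : ∀ S : Finset (Fin m), S.Nonempty → entS p X S = h S.card := by
    intro S hS
    have hcard : S.card ≤ m := by
      have := Finset.card_le_univ S
      simpa using this
    exact hiso S (Ck S.card) hS (hCkne _ (Finset.card_pos.mpr hS)) (hCkcard _ hcard).symm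
  -- decreasing increments from submodularity
  have hd : ∀ k, 1 ≤ k → k + 2 ≤ m → h (k+2) - h (k+1) ≤ h (k+1) - h k := by
    intro k hk1 hk2
    have hjm : k + 1 < m := by omega
    set j : Fin m := ⟨k+1, hjm⟩ with hj
    have hAC : Ck k ⊆ Ck (k+1) := by
      intro i hi
      simp only [hCk, Finset.mem_filter, Finset.mem_univ, true_and] at hi ⊢
      omega
    have hjC : j ∉ Ck (k+1) := by
      simp only [hCk, Finset.mem_filter, Finset.mem_univ, true_and, hj]
      omega
    have hsub := entS_submodular p hp0 X hAC hjC
    have e1 : insert j (Ck (k+1)) = Ck (k+2) := by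
      ext i
      simp only [hCk, Finset.mem_insert, Finset.mem_filter, Finset.mem_univ, true_and, hj,
        Fin.ext_iff]
      omega
    have hjCk : j ∉ Ck k := by
      simp only [hCk, Finset.mem_filter, Finset.mem_univ, true_and, hj]
      omega
    have e2 : entS p X (insert j (Ck k)) = h (k+1) := by
      rw [hSet _ ⟨j, Finset.mem_insert_self j _⟩, Finset.card_insert_of_notMem hjCk,
        hCkcard k (by omega)]
    rw [e1, e2] at hsub
    have e3 : entS p X (Ck (k+2)) = h (k+2) := rfl
    have e4 : entS p X (Ck (k+1)) = h (k+1) := rfl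
    have e5 : entS p X (Ck k) = h k := rfl
    rw [e3, e4, e5] at hsub
    linarith
  have hmono : ∀ j, 1 ≤ j → ∀ k, j ≤ k → k + 1 ≤ m → h (k+1) - h k ≤ h (j+1) - h j := by
    intro j hj1 k hjk
    induction k, hjk using Nat.le_induction with
    | base => intro _; exact le_refl _
    | succ k hk ih =>
      intro hkm
      have h1 := hd k (by omega) (by omega)
      have h2 := ih (by omega)
      have e : k + 1 + 1 = k + 2 := by omega
      rw [e]
      linarith
  -- telescoping
  have htel : ∀ s, s ≤ m → h m - h s = ∑ k ∈ Finset.Ico s m, (h (k+1) - h k) := by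
    intro s hs
    rw [Finset.sum_Ico_eq_sub _ hs, Finset.sum_range_sub, Finset.sum_range_sub]
    ring
  -- notation
  set b : ℕ := B.card with hbb
  have hb1 : 1 ≤ b := Finset.card_pos.mpr hB
  have hBc_card : Bᶜ.card = m - b := by
    rw [Finset.card_compl, Fintype.card_fin]
  have hBc_ne : Bᶜ.Nonempty := by
    rw [← Finset.card_pos, hBc_card]
    omega
  have hune : (Finset.univ : Finset (Fin m)).Nonempty := ⟨⟨0, by omega⟩, Finset.mem_univ _⟩
  have hu : entS p X Finset.univ = h m := by
    rw [hSet _ hune, Finset.card_univ, Fintype.card_fin]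
  have hc : entS p X Bᶜ = h (m - b) := by rw [hSet _ hBc_ne, hBc_card]
  have h1e : ∀ i : Fin m, entS p X {i} = h 1 := fun i => by
    rw [hSet _ (Finset.singleton_nonempty i), Finset.card_singleton]
  -- key inequality
  have hcard2 : (Finset.Ico (m - b) m).card = b := by
    rw [Nat.card_Ico]
    omega
  have hcard1 : (Finset.Ico 1 (m - b)).card = m - b - 1 := by
    rw [Nat.card_Ico]
  set c : ℝ := h (m - b - 1 + 1) - h (m - b - 1) with hcc
  have hT2 : ∑ k ∈ Finset.Ico (m - b) m, (h (k+1) - h k) ≤ (b : ℝ) * c := by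
    have := Finset.sum_le_card_nsmul (Finset.Ico (m - b) m) (fun k => h (k+1) - h k) c
      (fun k hkk => by
        rw [Finset.mem_Ico] at hkk
        exact hmono (m - b - 1) (by omega) k (by omega) (by omega))
    rwa [hcard2, nsmul_eq_mul] at this
  have hT1 : ((m - b - 1 : ℕ) : ℝ) * c ≤ ∑ k ∈ Finset.Ico 1 (m - b), (h (k+1) - h k) := by
    have := Finset.card_nsmul_le_sum (Finset.Ico 1 (m - b)) (fun k => h (k+1) - h k) c
      (fun k hkk => by
        rw [Finset.mem_Ico] at hkk
        exact hmono k (by omega) (m - b - 1) (by omega) (by omega))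
    rwa [hcard1, nsmul_eq_mul] at this
  have hsplitIco : ∑ k ∈ Finset.Ico 1 (m - b), (h (k+1) - h k)
      + ∑ k ∈ Finset.Ico (m - b) m, (h (k+1) - h k)
      = ∑ k ∈ Finset.Ico 1 m, (h (k+1) - h k) :=
    Finset.sum_Ico_consecutive _ (by omega) (by omega)
  have key : ((m : ℝ) - 1) * (h m - h (m - b)) ≤ (b : ℝ) * (h m - h 1) := by
    rw [htel (m - b) (by omega), htel 1 (by omega)]
    set T2 : ℝ := ∑ k ∈ Finset.Ico (m - b) m, (h (k+1) - h k) with hT2d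
    set T1 : ℝ := ∑ k ∈ Finset.Ico 1 (m - b), (h (k+1) - h k) with hT1d
    rw [← hsplitIco]
    have hcast : ((m - b - 1 : ℕ) : ℝ) = (m : ℝ) - (b : ℝ) - 1 := by
      rw [Nat.cast_sub (by omega : 1 ≤ m - b), Nat.cast_sub (by omega : b ≤ m), Nat.cast_one]
    have hb0 : (0 : ℝ) ≤ (b : ℝ) := Nat.cast_nonneg b
    have hmb1 : (0 : ℝ) ≤ (m : ℝ) - (b : ℝ) - 1 := by
      have : (b : ℝ) + 1 ≤ (m : ℝ) := by exact_mod_cast (by omega : b + 1 ≤ m)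
      linarith
    rw [hcast] at hT1
    nlinarith [mul_le_mul_of_nonneg_left hT2 hmb1, mul_le_mul_of_nonneg_left hT1 hb0]
  -- finish
  rw [hu, hc]
  have hsum1 : ∑ i ∈ B, (h m - entS p X {i}) = (b : ℝ) * (h m - h 1) := by
    rw [Finset.sum_congr rfl (fun i _ => by rw [h1e i]), Finset.sum_const, ← hbb, nsmul_eq_mul]
  have hsum2 : ∑ i : Fin m, (h m - entS p X {i}) = (m : ℝ) * (h m - h 1) := by
    rw [Finset.sum_congr rfl (fun i _ => by rw [h1e i]), Finset.sum_const, Finset.card_univ,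
      Fintype.card_fin, nsmul_eq_mul]
  rw [hsum1, hsum2]
  have hbpos : (0 : ℝ) < (b : ℝ) := by exact_mod_cast hb1
  have hm1pos : (0 : ℝ) < (m : ℝ) - 1 := by
    have : (2 : ℝ) ≤ (m : ℝ) := by exact_mod_cast hm
    linarith
  rw [one_div_mul_eq_div, one_div_mul_eq_div, div_le_div_iff₀ hbpos hm1pos]
  nlinarith [key]
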